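/- Let n ≥ 2 and let h₁, …, hₙ be positive reals with 0 < h̲ = h₁ ≤ h₂ ≤ ⋯ ≤ hₙ = h̄ < ∞. Let Aₙ = (1/n)·Σᵢ hᵢ and Gₙ = (Πᵢ hᵢ)^{1/n} be the arithmetic and geometric means, and Dₙ = log Aₙ − log Gₙ. Then Dₙ ≥ (2/n)·[ log((h̲+h̄)/2) − (1/2)(log h̲ + log h̄) ]. Moreover, equality holds when h₁ = h̲, hₙ = h̄, and hᵢ = (h̲+h̄)/2 for all i = 2, …, n−1. -/

import Mathlib

open scoped BigOperators

/-- Sum of a function vanishing off the two endpoints. -/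
lemma sum_two_endpoints {n : ℕ} (hn : 1 < n) (g : Fin n → ℝ)
    (hg : ∀ i : Fin n, (i : ℕ) ≠ 0 → (i : ℕ) ≠ n - 1 → g i = 0) :
    ∑ i, g i = g ⟨0, by omega⟩ + g ⟨n - 1, by omega⟩ := by
  have hne : (⟨0, by omega⟩ : Fin n) ≠ ⟨n - 1, by omega⟩ := by
    simp [Fin.ext_iff]; omega
  have hsub : ({⟨0, by omega⟩, ⟨n - 1, by omega⟩} : Finset (Fin n)) ⊆ Finset.univ :=
    Finset.subset_univ _
  rw [← Finset.sum_subset hsub, Finset.sum_pair hne]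
  intro i _ hi
  simp only [Finset.mem_insert, Finset.mem_singleton] at hi
  push_neg at hi
  refine hg i ?_ ?_
  · intro h0; exact hi.1 (by simp [Fin.ext_iff, h0])
  · intro h0; exact hi.2 (by simp [Fin.ext_iff, h0])

/-- Jensen's inequality for `log` with uniform weights. -/
lemma jensen_log {n : ℕ} (hn : 0 < n) (z : Fin n → ℝ) (hz : ∀ i, 0 < z i) :
    (∑ i, Real.log (z i)) / n ≤ Real.log ((∑ i, z i) / n) := by
  have hn' : (0 : ℝ) < n := by exact_mod_cast hn
  have key := (strictConcaveOn_log_Ioi.concaveOn).le_map_sum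
    (t := Finset.univ) (w := fun _ : Fin n => (n : ℝ)⁻¹) (p := z)
    (fun i _ => by positivity)
    (by simp [Finset.sum_const, mul_inv_cancel₀ hn'.ne'])
    (fun i _ => Set.mem_Ioi.mpr (hz i))
  have e1 : ∀ f : Fin n → ℝ, ∑ i, (n : ℝ)⁻¹ • f i = (∑ i, f i) / n := by
    intro f; rw [← Finset.smul_sum, smul_eq_mul, div_eq_inv_mul]
  rw [← e1, ← e1]; exact key

theorem stmt_11 (n : ℕ) (hn : 2 ≤ n) (h : Fin n → ℝ) (hmono : Monotone h)
    (hpos : 0 < h ⟨0, by omega⟩) :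
    let hlo : ℝ := h ⟨0, by omega⟩
    let hhi : ℝ := h ⟨n - 1, by omega⟩
    let D : ℝ := Real.log ((∑ i, h i) / n) - (∑ i, Real.log (h i)) / n
    ((2 / (n : ℝ)) * (Real.log ((hlo + hhi) / 2)
        - (1 / 2) * (Real.log hlo + Real.log hhi)) ≤ D) ∧
    ((∀ i : Fin n, (i : ℕ) ≠ 0 → (i : ℕ) ≠ n - 1 → h i = (hlo + hhi) / 2) →
      D = (2 / (n : ℝ)) * (Real.log ((hlo + hhi) / 2)
        - (1 / 2) * (Real.log hlo + Real.log hhi))) := by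
  intro hlo hhi D
  set i0 : Fin n := ⟨0, by omega⟩ with hi0
  set iN : Fin n := ⟨n - 1, by omega⟩ with hiN
  have hn0 : (0 : ℝ) < n := by exact_mod_cast (by omega : 0 < n)
  have hposall : ∀ i : Fin n, 0 < h i := fun i =>
    lt_of_lt_of_le hpos (hmono (by simp [hi0, Fin.le_def]))
  have hlohi : hlo ≤ hhi := hmono (by simp [hi0, hiN, Fin.le_def])
  set m : ℝ := (hlo + hhi) / 2 with hm
  have hmpos : 0 < m := by
    have := hposall i0; have := hposall iN
    simp only [hm]; unfold hlo hhi; positivity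
  constructor
  · -- inequality
    set y : Fin n → ℝ := fun i => if (i : ℕ) = 0 ∨ (i : ℕ) = n - 1 then m else h i with hy
    have hypos : ∀ i, 0 < y i := by
      intro i; simp only [hy]; split
      · exact hmpos
      · exact hposall i
    have hy0 : y i0 = m := by simp [hy, hi0]
    have hyN : y iN = m := by simp [hy, hiN]
    have hsum : ∑ i, y i = ∑ i, h i := by
      have := sum_two_endpoints hn (fun i => y i - h i) (by
        intro i h1 h2
        simp only [hy, h1, h2, if_neg, sub_self]
        simp [h1, h2])
      have hsub : ∑ i, (y i - h i) = ∑ i, y i - ∑ i, h i := Finset.sum_sub_distrib _ _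
      rw [hsub] at this
      have : ∑ i, y i - ∑ i, h i = (m - hlo) + (m - hhi) := by
        rw [this]; simp only [← hi0, ← hiN, hy0, hyN]; rfl
      have hm2 : (m - hlo) + (m - hhi) = 0 := by rw [hm]; ring
      linarith [this, hm2]
    have hlogsum : ∑ i, Real.log (y i) =
        ∑ i, Real.log (h i) + (2 * Real.log m - Real.log hlo - Real.log hhi) := by
      have := sum_two_endpoints hn (fun i => Real.log (y i) - Real.log (h i)) (by
        intro i h1 h2
        simp only [hy, h1, h2]
        simp [h1, h2])
      have hsub : ∑ i, (Real.log (y i) - Real.log (h i)) =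
          ∑ i, Real.log (y i) - ∑ i, Real.log (h i) := Finset.sum_sub_distrib _ _
      rw [hsub] at this
      simp only [← hi0, ← hiN, hy0, hyN] at this
      have : ∑ i, Real.log (y i) - ∑ i, Real.log (h i) =
          2 * Real.log m - Real.log hlo - Real.log hhi := by rw [this]; ring
      linarith
    have hjen := jensen_log (by omega : 0 < n) y hypos
    rw [hsum, hlogsum] at hjen
    have : (∑ i, Real.log (h i) + (2 * Real.log m - Real.log hlo - Real.log hhi)) / n
        = (∑ i, Real.log (h i)) / n
          + (2 * Real.log m - Real.log hlo - Real.log hhi) / n := by ring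
    rw [this] at hjen
    have hrw : (2 / (n : ℝ)) * (Real.log m - (1 / 2) * (Real.log hlo + Real.log hhi))
        = (2 * Real.log m - Real.log hlo - Real.log hhi) / n := by
      field_simp; ring
    simp only [D, ← hm, hrw]
    linarith
  · -- equality case
    intro hmid
    have hsum : ∑ i, h i = n * m := by
      have := sum_two_endpoints hn (fun i => h i - m) (by
        intro i h1 h2; simp [hmid i h1 h2, hm])
      have hsub : ∑ i, (h i - m) = ∑ i, h i - ∑ i, (fun _ : Fin n => m) i :=
        Finset.sum_sub_distrib _ _
      rw [hsub] at this
      simp only [Finset.sum_const, Finset.card_univ, Fintype.card_fin, nsmul_eq_mul,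
        ← hi0, ← hiN] at this
      have hm2 : (hlo - m) + (hhi - m) = 0 := by rw [hm]; ring
      linarith
    have hlogsum : ∑ i, Real.log (h i)
        = n * Real.log m + (Real.log hlo - Real.log m) + (Real.log hhi - Real.log m) := by
      have := sum_two_endpoints hn (fun i => Real.log (h i) - Real.log m) (by
        intro i h1 h2; simp [hmid i h1 h2, hm])
      have hsub : ∑ i, (Real.log (h i) - Real.log m)
          = ∑ i, Real.log (h i) - ∑ i, (fun _ : Fin n => Real.log m) i :=
        Finset.sum_sub_distrib _ _
      rw [hsub] at this
      simp only [Finset.sum_const, Finset.card_univ, Fintype.card_fin, nsmul_eq_mul,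
        ← hi0, ← hiN] at this
      linarith
    have hA : Real.log ((∑ i, h i) / n) = Real.log m := by
      rw [hsum, mul_comm, mul_div_assoc, div_self hn0.ne', mul_one]
    simp only [D, hA, hlogsum, ← hm]
    field_simp
    ring
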